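/- Let B = {|φ_k⟩ : 1 ≤ k ≤ m} be (not necessarily orthogonal) product unit vectors with no product vector in B^⊥, and suppose there is a probability vector p with μ₀ = Σ p_k μ_k satisfying Tr(μ₀²) = Tr(μ_rμ₀) for all r (Condition 2). Let λ_max be the largest eigenvalue of μ₀, b = 1/λ_max, ρ₀ = (1/(N−b))(I − bμ₀), ελ_max = inf{Tr(μ₀σ) : σ separable} > 0, and assume Condition 3: ελ_max > (λ_max − Tr(μ₀²))/(Nλ_max − 1), together with εNλ_max < 1. Define s₀ = (1 − εNλ_max)(Nλ_max − 1)/(N·Tr(μ₀²) − 1). Then 0 < s₀ < 1, τ₀ = (1−s₀)D₀ + s₀ρ₀ satisfies Tr(μ₀τ₀) = ελ_max, and W₀ = τ₀ + c₀I − ρ₀ with c₀ = Tr(τ₀(ρ₀−τ₀)) is an entanglement witness for ρ₀; in particular ρ₀ is inseparable. -/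

import Mathlib

open Matrix
open scoped ComplexOrder

/-- The rank-one projection `|φ⟩⟨φ|`. -/
def outer {n : Type*} [Fintype n] (φ : n → ℂ) : Matrix n n ℂ :=
  Matrix.vecMulVec φ (star φ)

/-- The set of separable densities on `ℂ^{d₁} ⊗ ℂ^{d₂}`. -/
def SepSet (d₁ d₂ : ℕ) : Set (Matrix (Fin d₁ × Fin d₂) (Fin d₁ × Fin d₂) ℂ) :=
  convexHull ℝ {M | ∃ (a : Fin d₁ → ℂ) (b : Fin d₂ → ℂ),
    star a ⬝ᵥ a = 1 ∧ star b ⬝ᵥ b = 1 ∧ M = outer (fun p => a p.1 * b p.2)}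

section Helpers
set_option linter.unusedSectionVars false
variable {n : Type*} [Fintype n] [DecidableEq n]

lemma outer_posSemidef (φ : n → ℂ) : (outer φ).PosSemidef := by
  rw [outer, vecMulVec_eq Unit, ← conjTranspose_replicateCol]
  exact posSemidef_self_mul_conjTranspose _

lemma trace_outer (φ : n → ℂ) : (outer φ).trace = star φ ⬝ᵥ φ := by
  simp [outer, trace, diag, vecMulVec_apply, dotProduct, mul_comm]

lemma psd_trace_nonneg {A : Matrix n n ℂ} (hA : A.PosSemidef) : 0 ≤ A.trace := by
  rw [trace]
  refine Finset.sum_nonneg fun i _ => ?_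
  have := hA.dotProduct_mulVec_nonneg (Pi.single i 1)
  simpa [dotProduct, Pi.single_apply] using this

open MatrixOrder in
lemma psd_trace_mul_nonneg {A B : Matrix n n ℂ} (hA : A.PosSemidef) (hB : B.PosSemidef) :
    0 ≤ (A * B).trace := by
  obtain ⟨C, rfl⟩ := CStarAlgebra.nonneg_iff_eq_star_mul_self.mp hB.nonneg
  rw [← mul_assoc, trace_mul_comm]
  rw [← mul_assoc]
  exact psd_trace_nonneg (hA.mul_mul_conjTranspose_same C)
end Helpers

lemma real_smul_mat {n : Type*} [Fintype n] (r : ℝ) (M : Matrix n n ℂ) :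
    r • M = (r : ℂ) • M := by
  ext i j
  simp [Matrix.smul_apply, Complex.real_smul]

lemma psd_real_smul {n : Type*} [Fintype n] {M : Matrix n n ℂ} (hM : M.PosSemidef)
    {r : ℝ} (hr : 0 ≤ r) : (r • M).PosSemidef := by
  rw [real_smul_mat]
  refine PosSemidef.of_dotProduct_mulVec_nonneg ?_ fun x => ?_
  · rw [IsHermitian, conjTranspose_smul, hM.1]
    norm_num
  · rw [smul_mulVec, dotProduct_smul]
    exact smul_nonneg (by exact_mod_cast Complex.zero_le_real.mpr hr) (hM.dotProduct_mulVec_nonneg x)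

lemma sep_props {d₁ d₂ : ℕ} {σ : Matrix (Fin d₁ × Fin d₂) (Fin d₁ × Fin d₂) ℂ}
    (h : σ ∈ SepSet d₁ d₂) : σ.PosSemidef ∧ σ.trace = 1 := by
  rw [SepSet, convexHull_eq] at h
  obtain ⟨ι, t, w, z, hw0, hw1, hz, rfl⟩ := h
  rw [Finset.centerMass, hw1, inv_one, one_smul]
  have hzp : ∀ i ∈ t, (z i).PosSemidef ∧ (z i).trace = 1 := by
    intro i hi
    obtain ⟨a, b, ha, hb, hzi⟩ := hz i hi
    constructor
    · rw [hzi]; exact outer_posSemidef _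
    · rw [hzi, trace_outer]
      have : (star (fun p : Fin d₁ × Fin d₂ => a p.1 * b p.2) ⬝ᵥ fun p => a p.1 * b p.2)
          = (star a ⬝ᵥ a) * (star b ⬝ᵥ b) := by
        simp only [dotProduct, Pi.star_apply, star_mul', Fintype.sum_prod_type,
          Finset.sum_mul_sum]
        refine Finset.sum_congr rfl fun i _ => Finset.sum_congr rfl fun j _ => by ring
      rw [this, ha, hb, one_mul]
  constructor
  · refine Finset.sum_induction _ _ (fun a b ha hb => ha.add hb) Matrix.PosSemidef.zero ?_
    intro i hi
    exact psd_real_smul (hzp i hi).1 (hw0 i hi)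
  · rw [trace_sum]
    calc (∑ i ∈ t, ((w i) • z i).trace) = ∑ i ∈ t, (w i : ℂ) := by
          refine Finset.sum_congr rfl fun i hi => ?_
          rw [real_smul_mat, trace_smul, (hzp i hi).2, smul_eq_mul, mul_one]
      _ = 1 := by rw [← Complex.ofReal_sum, hw1, Complex.ofReal_one]

section Spectral
variable {n : Type*} [Fintype n] [DecidableEq n] {A : Matrix n n ℂ}

lemma diag_const_eq (c : ℂ) : (diagonal (fun _ : n => c)) = c • (1 : Matrix n n ℂ) := by
  ext i j
  by_cases h : i = j <;> simp [diagonal, one_apply, h]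

lemma trace_eq_sum_eigen (hH : A.IsHermitian) :
    A.trace = ∑ i, (hH.eigenvalues i : ℂ) := by
  conv_lhs => rw [hH.spectral_theorem, Unitary.conjStarAlgAut_apply]
  rw [trace_mul_comm, ← mul_assoc, Unitary.coe_star_mul_self, one_mul, trace_diagonal]
  simp

lemma trace_sq_eq_sum_eigen (hH : A.IsHermitian) :
    (A * A).trace = ∑ i, ((hH.eigenvalues i : ℂ))^2 := by
  set U := (hH.eigenvectorUnitary : Matrix n n ℂ) with hU
  set D := diagonal (RCLike.ofReal ∘ hH.eigenvalues : n → ℂ) with hD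
  have hUsU : star U * U = 1 := Unitary.coe_star_mul_self _
  have e1 : (U * D * star U) * (U * D * star U) = U * D * (star U * U) * (D * star U) := by
    noncomm_ring
  conv_lhs => rw [hH.spectral_theorem, Unitary.conjStarAlgAut_apply]
  rw [e1, hUsU, mul_one, trace_mul_comm]
  have e2 : (D * star U) * (U * D) = D * (star U * U) * D := by noncomm_ring
  rw [e2, hUsU, mul_one, hD, diagonal_mul_diagonal, trace_diagonal]
  simp [pow_two]

lemma eigen_le_max (hH : A.IsHermitian) {L : ℝ}
    (hmax : ∀ (c : ℝ) (v : n → ℂ), v ≠ 0 → A.mulVec v = (c : ℂ) • v → c ≤ L) (i : n) :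
    hH.eigenvalues i ≤ L := by
  refine hmax _ (⇑(hH.eigenvectorBasis i)) ?_ ?_
  · intro h0
    exact hH.eigenvectorBasis.orthonormal.ne_zero i (by ext j; exact congrFun h0 j)
  · rw [hH.mulVec_eigenvectorBasis]
    ext j
    simp [Complex.real_smul]

lemma psd_smul_one_sub (hH : A.IsHermitian) {L : ℝ}
    (hL : ∀ i, hH.eigenvalues i ≤ L) : ((L : ℂ) • 1 - A).PosSemidef := by
  have hUUs : (hH.eigenvectorUnitary : Matrix n n ℂ) * star (hH.eigenvectorUnitary : Matrix n n ℂ)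
      = 1 := Matrix.mem_unitaryGroup_iff.mp hH.eigenvectorUnitary.2
  have key : (L : ℂ) • 1 - A =
      (hH.eigenvectorUnitary : Matrix n n ℂ) *
        diagonal (fun i => ((L - hH.eigenvalues i : ℝ) : ℂ)) *
        star ((hH.eigenvectorUnitary : Matrix n n ℂ)) := by
    have expand : diagonal (fun i => ((L - hH.eigenvalues i : ℝ) : ℂ)) =
        (L : ℂ) • 1 - diagonal (RCLike.ofReal ∘ hH.eigenvalues : n → ℂ) := by
      rw [← diag_const_eq, diagonal_sub]
      refine congrArg diagonal ?_
      funext i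
      simp
    rw [expand, mul_sub, sub_mul, mul_smul_comm, smul_mul_assoc, mul_one, hUUs]
    conv_lhs => rw [hH.spectral_theorem, Unitary.conjStarAlgAut_apply]
  rw [key, Matrix.star_eq_conjTranspose]
  refine PosSemidef.mul_mul_conjTranspose_same (PosSemidef.diagonal fun i => ?_) _
  show (0:ℂ) ≤ _
  rw [Complex.zero_le_real]
  linarith [hL i]

lemma eq_smul_one_of_eigen_const (hH : A.IsHermitian) {c : ℝ}
    (hc : ∀ i, hH.eigenvalues i = c) : A = (c : ℂ) • 1 := by
  have h2 : (RCLike.ofReal ∘ hH.eigenvalues : n → ℂ) = fun _ => (c : ℂ) := by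
    funext i; simp [hc i]
  conv_lhs => rw [hH.spectral_theorem, Unitary.conjStarAlgAut_apply]
  rw [h2, diag_const_eq, mul_smul_comm, smul_mul_assoc, mul_one,
    Matrix.mem_unitaryGroup_iff.mp hH.eigenvectorUnitary.2]
end Spectral

lemma psd_cmul {n : Type*} [Fintype n] {M : Matrix n n ℂ} (hM : M.PosSemidef)
    {r : ℝ} (hr : 0 ≤ r) : (((r : ℂ)) • M).PosSemidef := by
  rw [← real_smul_mat]
  exact psd_real_smul hM hr

lemma cle_re {z : ℂ} (h : 0 ≤ z) : 0 ≤ z.re := by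
  rw [Complex.le_def] at h
  simpa using h.1


set_option maxHeartbeats 1000000 in
/-- Non-orthogonal UPB construction: under Conditions 1 (`B^⊥` contains no nonzero product
vector), 2 (`Tr(μ₀²) = Tr(μ_r μ₀)` for all `r`), and 3
(`ελ_max > (λ_max - Tr(μ₀²))/(Nλ_max - 1)`), together with `εNλ_max < 1`, and with
`b = 1/λ_max`, `ρ₀ = (1/(N-b))(I - bμ₀)`,
`s₀ = (1 - εNλ_max)(Nλ_max - 1)/(N Tr(μ₀²) - 1)`, `τ₀ = (1-s₀)D₀ + s₀ρ₀`,
`c₀ = Tr(τ₀(ρ₀-τ₀))`, `W₀ = τ₀ + c₀I - ρ₀`: one has `0 < s₀ < 1`, `τ₀` is a density,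
`Tr(μ₀τ₀) = ελ_max`, and `W₀` is an entanglement witness for `ρ₀`, which is therefore
inseparable. -/
theorem stmt17 {d₁ d₂ m N : ℕ} (hN : N = d₁ * d₂) (hm0 : 0 < m)
    (α : Fin m → Fin d₁ → ℂ) (β : Fin m → Fin d₂ → ℂ)
    (φ : Fin m → Fin d₁ × Fin d₂ → ℂ)
    (hprod : ∀ k, φ k = fun p => α k p.1 * β k p.2)
    (hunit : ∀ k, star (φ k) ⬝ᵥ φ k = 1)
    (hUPB : ∀ (a : Fin d₁ → ℂ) (b : Fin d₂ → ℂ),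
      (∀ k, star (fun p : Fin d₁ × Fin d₂ => a p.1 * b p.2) ⬝ᵥ φ k = 0) →
      (fun p : Fin d₁ × Fin d₂ => a p.1 * b p.2) = 0)
    (p : Fin m → ℝ) (hp : ∀ k, 0 ≤ p k) (hpsum : ∑ k, p k = 1)
    (μ₀ D₀ : Matrix (Fin d₁ × Fin d₂) (Fin d₁ × Fin d₂) ℂ)
    (hμ₀ : μ₀ = ∑ k, (p k : ℂ) • outer (φ k))
    (hD₀ : D₀ = (N : ℂ)⁻¹ • 1)
    (hcond2 : ∀ r, Matrix.trace (μ₀ * μ₀) = Matrix.trace (outer (φ r) * μ₀))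
    (lammax : ℝ)
    (hev : ∃ v : Fin d₁ × Fin d₂ → ℂ, v ≠ 0 ∧ μ₀.mulVec v = (lammax : ℂ) • v)
    (hmax : ∀ (c : ℝ) (v : Fin d₁ × Fin d₂ → ℂ), v ≠ 0 →
      μ₀.mulVec v = (c : ℂ) • v → c ≤ lammax)
    (b : ℝ) (hb : b = lammax⁻¹)
    (ρ₀ : Matrix (Fin d₁ × Fin d₂) (Fin d₁ × Fin d₂) ℂ)
    (hρ₀ : ρ₀ = ((N : ℂ) - (b : ℂ))⁻¹ • (1 - (b : ℂ) • μ₀))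
    (ε : ℝ)
    (hε : ε * lammax = sInf ((fun σ => (Matrix.trace (μ₀ * σ)).re) '' SepSet d₁ d₂))
    (hεpos : 0 < ε * lammax)
    (hcond3 : ε * lammax >
      (lammax - (Matrix.trace (μ₀ * μ₀)).re) / (N * lammax - 1))
    (hεsmall : ε * N * lammax < 1)
    (s₀ : ℝ)
    (hs₀ : s₀ = (1 - ε * N * lammax) * (N * lammax - 1) /
      (N * (Matrix.trace (μ₀ * μ₀)).re - 1))
    (τ₀ : Matrix (Fin d₁ × Fin d₂) (Fin d₁ × Fin d₂) ℂ)
    (hτ₀ : τ₀ = ((1 : ℂ) - (s₀ : ℂ)) • D₀ + (s₀ : ℂ) • ρ₀)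
    (c₀ : ℂ) (hc₀ : c₀ = Matrix.trace (τ₀ * (ρ₀ - τ₀)))
    (W₀ : Matrix (Fin d₁ × Fin d₂) (Fin d₁ × Fin d₂) ℂ)
    (hW₀ : W₀ = τ₀ + c₀ • 1 - ρ₀) :
    0 < s₀ ∧ s₀ < 1 ∧
    τ₀.PosSemidef ∧ τ₀.trace = 1 ∧
    (Matrix.trace (μ₀ * τ₀)).re = ε * lammax ∧
    (∀ σ ∈ SepSet d₁ d₂, 0 ≤ (Matrix.trace (W₀ * σ)).re) ∧
    (Matrix.trace (W₀ * ρ₀)).re < 0 ∧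
    ρ₀ ∉ SepSet d₁ d₂ := by
  
  -- notation
  set L := lammax with hL
  -- nonemptiness
  have hne : Nonempty (Fin d₁ × Fin d₂) := by
    by_contra h
    rw [not_nonempty_iff] at h
    have h1 := hunit ⟨0, hm0⟩
    rw [dotProduct] at h1
    simp [Finset.univ_eq_empty] at h1
  have hNpos : 0 < N := by
    rcases hne with ⟨i, j⟩
    rw [hN]
    exact Nat.mul_pos (Fin.pos i) (Fin.pos j)
  have hNR : (0:ℝ) < (N:ℝ) := by exact_mod_cast hNpos
  have hcard : Fintype.card (Fin d₁ × Fin d₂) = N := by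
    simp [Fintype.card_prod, hN]
  -- μ₀ is PSD with trace 1
  have hμPSD : μ₀.PosSemidef := by
    rw [hμ₀]
    refine Finset.sum_induction _ _ (fun a b ha hb => ha.add hb) Matrix.PosSemidef.zero ?_
    intro k _
    exact psd_cmul (outer_posSemidef _) (hp k)
  have hμH : μ₀.IsHermitian := hμPSD.1
  have htrμ : μ₀.trace = 1 := by
    rw [hμ₀, trace_sum]
    calc (∑ k, ((p k : ℂ) • outer (φ k)).trace) = ∑ k, (p k : ℂ) := by
          refine Finset.sum_congr rfl fun k _ => ?_
          rw [trace_smul, trace_outer, hunit, smul_eq_mul, mul_one]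
      _ = 1 := by rw [← Complex.ofReal_sum, hpsum, Complex.ofReal_one]
  -- eigenvalues
  set lam := hμH.eigenvalues with hlam
  have hlam_nonneg : ∀ i, 0 ≤ lam i := hμPSD.eigenvalues_nonneg
  have hlam_le : ∀ i, lam i ≤ L := eigen_le_max hμH hmax
  have hlamsum : ∑ i, lam i = 1 := by
    have h1 := trace_eq_sum_eigen hμH
    rw [htrμ] at h1
    exact_mod_cast h1.symm
  set T := (Matrix.trace (μ₀ * μ₀)).re with hTdef
  have h2 : Matrix.trace (μ₀ * μ₀) = ((∑ i, (lam i)^2 : ℝ) : ℂ) := by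
    rw [trace_sq_eq_sum_eigen hμH]; push_cast; rfl
  have hTsum : T = ∑ i, (lam i)^2 := by rw [hTdef, h2, Complex.ofReal_re]
  have hTc : Matrix.trace (μ₀ * μ₀) = ((T : ℝ) : ℂ) := by rw [h2, hTsum]
  -- basic real inequalities
  have hTleL : T ≤ L := by
    rw [hTsum]
    calc (∑ i, (lam i)^2) ≤ ∑ i, L * lam i := by
          refine Finset.sum_le_sum fun i _ => ?_
          rw [pow_two]
          exact mul_le_mul_of_nonneg_right (hlam_le i) (hlam_nonneg i)
      _ = L := by rw [← Finset.mul_sum, hlamsum, mul_one]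
  have hNT1 : 1 ≤ (N:ℝ) * T := by
    have key : 0 ≤ ∑ i, (lam i - 1/(N:ℝ))^2 :=
      Finset.sum_nonneg fun i _ => sq_nonneg _
    have expand : ∑ i, (lam i - 1/(N:ℝ))^2 = T - 1/(N:ℝ) := by
      have : ∀ i, (lam i - 1/(N:ℝ))^2 = (lam i)^2 - (2/(N:ℝ)) * lam i + 1/(N:ℝ)^2 := by
        intro i; ring
      rw [Finset.sum_congr rfl fun i _ => this i]
      rw [Finset.sum_add_distrib, Finset.sum_sub_distrib, ← Finset.mul_sum, hlamsum, ← hTsum]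
      rw [Finset.sum_const, Finset.card_univ, hcard, nsmul_eq_mul]
      field_simp
      ring
    rw [expand] at key
    have hinv : (N:ℝ) * (1/(N:ℝ)) = 1 := by field_simp
    nlinarith [mul_nonneg hNR.le key]
  -- a separable state exists
  have hd₁ : 0 < d₁ := by rcases hne with ⟨i, j⟩; exact Fin.pos i
  have hd₂ : 0 < d₂ := by rcases hne with ⟨i, j⟩; exact Fin.pos j
  have hsep_ne : (SepSet d₁ d₂).Nonempty := by
    have ha : star (Pi.single (⟨0, hd₁⟩ : Fin d₁) (1:ℂ)) ⬝ᵥ (Pi.single (⟨0, hd₁⟩ : Fin d₁) (1:ℂ)) = 1 := by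
      simp [dotProduct, Pi.single_apply, apply_ite]
    have hbv : star (Pi.single (⟨0, hd₂⟩ : Fin d₂) (1:ℂ)) ⬝ᵥ (Pi.single (⟨0, hd₂⟩ : Fin d₂) (1:ℂ)) = 1 := by
      simp [dotProduct, Pi.single_apply, apply_ite]
    exact ⟨_, subset_convexHull ℝ _ ⟨_, _, ha, hbv, rfl⟩⟩
  -- strict inequality N*T > 1
  have hNT : 1 < (N:ℝ) * T := by
    rcases lt_or_eq_of_le hNT1 with h | h
    · exact h
    -- equality case: μ₀ = (1/N) • 1
    exfalso
    have hTN : T = 1/(N:ℝ) := by field_simp; linarith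
    have hzero : ∑ i, (lam i - 1/(N:ℝ))^2 = 0 := by
      have : ∀ i, (lam i - 1/(N:ℝ))^2 = (lam i)^2 - (2/(N:ℝ)) * lam i + 1/(N:ℝ)^2 := by
        intro i; ring
      rw [Finset.sum_congr rfl fun i _ => this i]
      rw [Finset.sum_add_distrib, Finset.sum_sub_distrib, ← Finset.mul_sum, hlamsum, ← hTsum]
      rw [Finset.sum_const, Finset.card_univ, hcard, hTN, nsmul_eq_mul]
      field_simp
      ring
    have hlamconst : ∀ i, lam i = 1/(N:ℝ) := by
      intro i
      have h0 := (Finset.sum_eq_zero_iff_of_nonneg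
        (fun i _ => sq_nonneg (lam i - 1/(N:ℝ)))).mp hzero i (Finset.mem_univ i)
      have := pow_eq_zero_iff (n := 2) (by norm_num) |>.mp h0
      linarith [sub_eq_zero.mp this]
    have hμeq : μ₀ = ((1/(N:ℝ) : ℝ) : ℂ) • 1 := eq_smul_one_of_eigen_const hμH hlamconst
    -- then every separable σ gives trace value 1/N
    have himg : ((fun σ => (Matrix.trace (μ₀ * σ)).re) '' SepSet d₁ d₂) = {1/(N:ℝ)} := by
      apply Set.eq_singleton_iff_nonempty_unique_mem.mpr
      constructor
      · exact hsep_ne.image _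
      · rintro x ⟨σ, hσ, rfl⟩
        simp only
        rw [hμeq, smul_mul_assoc, one_mul, trace_smul, smul_eq_mul, (sep_props hσ).2, mul_one]
        norm_num
    rw [himg, csInf_singleton] at hε
    have : ε * (N:ℝ) * L = 1 := by
      rw [mul_comm ε (N:ℝ), mul_assoc, hε]
      field_simp
    linarith
  have hNL : 1 < (N:ℝ) * L := lt_of_lt_of_le hNT (by nlinarith)
  have hLpos : 0 < L := by nlinarith
  have hbpos : 0 < b := by rw [hb]; positivity
  have hbL : b * L = 1 := by rw [hb]; field_simp
  have hNb : 0 < (N:ℝ) - b := by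
    rw [hb]
    rw [sub_pos, inv_lt_iff_one_lt_mul₀ hLpos]
    linarith [hNL]
  -- s₀ bounds
  have hs₀pos : 0 < s₀ := by
    rw [hs₀]
    exact div_pos (mul_pos (by linarith) (by linarith)) (by linarith)
  have hcond3key : L - T < (ε*L) * ((N:ℝ)*L - 1) := by
    exact (div_lt_iff₀ (by linarith)).mp hcond3
  have hεNL : ε * (N:ℝ) * L = (N:ℝ) * (ε*L) := by ring
  have hdenpos : (0:ℝ) < (N:ℝ)*T - 1 := by linarith
  have hs₀lt1 : s₀ < 1 := by
    rw [hs₀, div_lt_one hdenpos, hεNL]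
    nlinarith [mul_pos hNR (sub_pos.mpr hcond3key)]
  -- (ε*L) is a lower bound on separable values
  have hEle : ∀ σ ∈ SepSet d₁ d₂, (ε*L) ≤ (Matrix.trace (μ₀ * σ)).re := by
    intro σ hσ
    rw [hε]
    refine csInf_le ⟨0, ?_⟩ ⟨σ, hσ, rfl⟩
    rintro x ⟨σ', hσ', rfl⟩
    exact cle_re (psd_trace_mul_nonneg hμPSD (sep_props hσ').1)
  -- complex auxiliary facts
  have hNC : (N:ℂ) ≠ 0 := Nat.cast_ne_zero.mpr hNpos.ne'
  have hNbC' : (N:ℂ) - (b:ℂ) = (((N:ℝ) - b : ℝ) : ℂ) := by push_cast; ring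
  have hNbC : (N:ℂ) - (b:ℂ) ≠ 0 := by
    rw [hNbC']; exact Complex.ofReal_ne_zero.mpr (by linarith)
  have hLC : (L:ℂ) ≠ 0 := Complex.ofReal_ne_zero.mpr hLpos.ne'
  have hbC : (b:ℂ) = (L:ℂ)⁻¹ := by rw [hb]; push_cast; rfl
  have hNLC : (N:ℂ) * (L:ℂ) - 1 ≠ 0 := by
    have : (N:ℂ) * (L:ℂ) - 1 = (((N:ℝ) * L - 1 : ℝ) : ℂ) := by push_cast; ring
    rw [this]; exact Complex.ofReal_ne_zero.mpr (by linarith)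
  have htr1 : Matrix.trace (1 : Matrix (Fin d₁ × Fin d₂) (Fin d₁ × Fin d₂) ℂ) = (N:ℂ) := by
    rw [trace_one, hcard]
  -- trace of ρ₀
  have hTrρ : ρ₀.trace = 1 := by
    rw [hρ₀, trace_smul, trace_sub, trace_smul, htrμ, htr1, smul_eq_mul, smul_eq_mul, mul_one]
    exact inv_mul_cancel₀ hNbC
  -- trace (μ₀ * ρ₀)
  have hTrμρ : Matrix.trace (μ₀ * ρ₀) = (((L - T)/((N:ℝ)*L - 1) : ℝ) : ℂ) := by
    rw [hρ₀, mul_smul_comm, trace_smul, Matrix.mul_sub, Matrix.mul_one, mul_smul_comm,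
      trace_sub, trace_smul, htrμ, hTc, smul_eq_mul, smul_eq_mul, hbC]
    have hNbC2 : (N:ℂ) - ((L:ℂ))⁻¹ ≠ 0 := by rw [← hbC]; exact hNbC
    push_cast
    field_simp
  -- trace (μ₀ * D₀)
  have hTrμD : Matrix.trace (μ₀ * D₀) = (((N:ℝ)⁻¹ : ℝ) : ℂ) := by
    rw [hD₀, mul_smul_comm, trace_smul, Matrix.mul_one, htrμ, smul_eq_mul, mul_one]
    push_cast
    norm_num
  -- trace (μ₀ * τ₀) = (ε*L)
  have hrealE : (1 - s₀) * ((N:ℝ))⁻¹ + s₀ * ((L - T)/((N:ℝ)*L - 1)) = (ε*L) := by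
    rw [hs₀, hεNL]
    have h1 : (N:ℝ)*T - 1 ≠ 0 := ne_of_gt hdenpos
    have h2 : (N:ℝ)*L - 1 ≠ 0 := ne_of_gt (by linarith)
    have h3 : (N:ℝ) ≠ 0 := ne_of_gt hNR
    field_simp [h1, h2, h3]
    ring
  have hTrμτ : Matrix.trace (μ₀ * τ₀) = (((ε*L) : ℝ) : ℂ) := by
    rw [hτ₀, Matrix.mul_add, mul_smul_comm, mul_smul_comm, trace_add, trace_smul, trace_smul,
      hTrμD, hTrμρ, smul_eq_mul, smul_eq_mul, ← hrealE]
    push_cast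
    ring
  -- τ₀ is a density matrix
  have hD₀PSD : D₀.PosSemidef := by
    rw [hD₀]
    have h1 : ((N:ℂ))⁻¹ = (((N:ℝ)⁻¹ : ℝ) : ℂ) := by push_cast; rfl
    rw [h1]
    exact psd_cmul Matrix.PosSemidef.one (by positivity)
  have h1b : (1 : Matrix (Fin d₁ × Fin d₂) (Fin d₁ × Fin d₂) ℂ) - (b:ℂ) • μ₀
      = (b:ℂ) • ((L:ℂ) • 1 - μ₀) := by
    rw [smul_sub, smul_smul]
    have hbLc : (b:ℂ) * (L:ℂ) = 1 := by
      rw [← Complex.ofReal_mul, hbL, Complex.ofReal_one]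
    rw [hbLc, one_smul]
  have hρform : ρ₀ = ((b/((N:ℝ)-b) : ℝ) : ℂ) • ((L:ℂ) • 1 - μ₀) := by
    rw [hρ₀, h1b, smul_smul]
    congr 1
    rw [hNbC']
    push_cast
    field_simp
  have hρPSD : ρ₀.PosSemidef := by
    rw [hρform]
    exact psd_cmul (psd_smul_one_sub hμH hlam_le) (div_nonneg hbpos.le hNb.le)
  have hτPSD : τ₀.PosSemidef := by
    rw [hτ₀]
    have h1 : ((1:ℂ) - (s₀:ℂ)) = (((1 - s₀ : ℝ)):ℂ) := by push_cast; ring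
    rw [h1]
    exact (psd_cmul hD₀PSD (by linarith)).add (psd_cmul hρPSD hs₀pos.le)
  have hTrτ : τ₀.trace = 1 := by
    rw [hτ₀, trace_add, trace_smul, trace_smul, hD₀, trace_smul, htr1, hTrρ,
      smul_eq_mul, smul_eq_mul, smul_eq_mul, inv_mul_cancel₀ hNC]
    ring
  -- the difference τ₀ - ρ₀
  set kC := (1 - s₀)/((N:ℝ)*((N:ℝ)*L-1)) with hkC
  have hkCpos : 0 < kC := by
    rw [hkC]
    exact div_pos (by linarith) (by nlinarith)
  have hdiff : τ₀ - ρ₀ = ((kC:ℝ):ℂ) • ((N:ℂ) • μ₀ - 1) := by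
    rw [hτ₀, hρ₀, hD₀, hkC, hbC]
    match_scalars
    · push_cast
      field_simp
      ring
    · push_cast
      field_simp
      ring
  -- value of c₀
  have htermτ : Matrix.trace (τ₀ * ((N:ℂ) • μ₀ - 1)) = (N:ℂ) * (((ε*L):ℝ):ℂ) - 1 := by
    rw [Matrix.mul_sub, mul_smul_comm, Matrix.mul_one, trace_sub, trace_smul,
      hTrτ, trace_mul_comm, hTrμτ, smul_eq_mul]
  have hc₀val : c₀ = ((kC * (1 - (N:ℝ)*(ε*L)) : ℝ) : ℂ) := by
    have hρτ : ρ₀ - τ₀ = -(((kC:ℝ):ℂ) • ((N:ℂ) • μ₀ - 1)) := by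
      rw [← hdiff, neg_sub]
    rw [hc₀, hρτ, Matrix.mul_neg, trace_neg, mul_smul_comm, trace_smul, htermτ, smul_eq_mul]
    push_cast
    ring
  -- the witness property
  have hWsep : ∀ σ ∈ SepSet d₁ d₂, 0 ≤ (Matrix.trace (W₀ * σ)).re := by
    intro σ hσ
    obtain ⟨hσPSD, hσtr⟩ := sep_props hσ
    have hWσ : Matrix.trace (W₀ * σ)
        = ((kC:ℝ):ℂ) * ((N:ℂ) * Matrix.trace (μ₀ * σ) - 1) + c₀ := by
      have e : W₀ = (((kC:ℝ):ℂ) • ((N:ℂ) • μ₀ - 1)) + c₀ • 1 := by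
        rw [hW₀, ← hdiff]; module
      simp only [e, Matrix.add_mul, Matrix.sub_mul, smul_mul_assoc, Matrix.one_mul,
        trace_add, trace_sub, trace_smul, hσtr, smul_eq_mul, mul_one]
    have hre : (Matrix.trace (W₀ * σ)).re
        = kC * ((N:ℝ) * (Matrix.trace (μ₀ * σ)).re - 1) + kC * (1 - (N:ℝ)*(ε*L)) := by
      rw [hWσ, hc₀val]
      simp [Complex.add_re, Complex.mul_re, Complex.sub_re, Complex.ofReal_re,
        Complex.ofReal_im, Complex.mul_im, Complex.sub_im]
    rw [hre]
    nlinarith [mul_nonneg (mul_nonneg hkCpos.le hNR.le) (sub_nonneg.mpr (hEle σ hσ))]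
  -- trace (W₀ * ρ₀) < 0
  have hWρ : Matrix.trace (W₀ * ρ₀) = - Matrix.trace ((τ₀ - ρ₀) * (τ₀ - ρ₀)) := by
    rw [hW₀, hc₀]
    simp only [Matrix.sub_mul, Matrix.add_mul, Matrix.mul_sub, trace_sub, trace_add,
      smul_mul_assoc, trace_smul, smul_eq_mul, hTrρ, mul_one, Matrix.one_mul]
    rw [trace_mul_comm ρ₀ τ₀]
    ring
  have hsq : Matrix.trace ((τ₀ - ρ₀) * (τ₀ - ρ₀)) = ((kC^2 * ((N:ℝ)^2 * T - N) : ℝ) : ℂ) := by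
    rw [hdiff, smul_mul_assoc, mul_smul_comm, smul_smul, trace_smul]
    have hin : Matrix.trace (((N:ℂ) • μ₀ - 1) * ((N:ℂ) • μ₀ - 1))
        = (N:ℂ)^2 * ((T:ℝ):ℂ) - (N:ℂ) := by
      simp only [Matrix.sub_mul, Matrix.mul_sub, smul_mul_assoc, mul_smul_comm, trace_sub,
        trace_smul, smul_smul, smul_eq_mul, Matrix.one_mul, Matrix.mul_one, htrμ, htr1, hTc]
      ring
    rw [hin, smul_eq_mul]
    push_cast
    ring
  have hWρneg : (Matrix.trace (W₀ * ρ₀)).re < 0 := by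
    rw [hWρ, hsq]
    simp only [Complex.neg_re, Complex.ofReal_re, neg_neg, Left.neg_neg_iff]
    have h1 : (0:ℝ) < (N:ℝ)^2 * T - N := by nlinarith
    nlinarith [pow_pos hkCpos 2]
  refine ⟨hs₀pos, hs₀lt1, hτPSD, hTrτ, ?_, hWsep, hWρneg, ?_⟩
  · rw [hTrμτ, Complex.ofReal_re]
  · intro h
    exact absurd (hWsep ρ₀ h) (not_le.mpr hWρneg)
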